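/- ∫_0^1 ∫_0^1 1/(1 + x²y²) dx dy = G, where G = ∑_{k=0}^∞ (−1)^k/(2k+1)² is Catalan's constant. -/
import Mathlib

open MeasureTheory Set

private lemma pow_int (k : ℕ) (c : ℝ) :
    ∫ y in Ioc (0:ℝ) 1, c * y ^ (2 * k) = c / (2 * k + 1) := by
  rw [← intervalIntegral.integral_of_le zero_le_one,
    intervalIntegral.integral_const_mul, integral_pow]
  push_cast
  rw [one_pow, zero_pow (by positivity)]
  ring

private lemma sum_geom {x : ℝ} (hx0 : 0 ≤ x) (hx1 : x < 1) :
    Summable fun k : ℕ => x ^ (2 * k) / (2 * k + 1) := by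
  apply Summable.of_nonneg_of_le (fun k => by positivity)
    (fun k => ?_) (summable_geometric_of_lt_one (by positivity) (by nlinarith : x ^ 2 < 1))
  rw [pow_mul]
  calc (x ^ 2) ^ k / (2 * (k:ℝ) + 1) ≤ (x ^ 2) ^ k / 1 :=
        div_le_div_of_nonneg_left (by positivity) one_pos
          (by linarith [Nat.cast_nonneg (α:=ℝ) k])
    _ = (x ^ 2) ^ k := div_one _

private lemma inner_int {x : ℝ} (hx0 : 0 ≤ x) (hx1 : x < 1) :
    (∫ y in (0:ℝ)..1, 1 / (1 + x ^ 2 * y ^ 2)) =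
      ∑' k : ℕ, (-1 : ℝ) ^ k * x ^ (2 * k) / (2 * k + 1) := by
  rw [intervalIntegral.integral_of_le zero_le_one]
  have key : ∀ y ∈ Ioc (0:ℝ) 1, 1 / (1 + x ^ 2 * y ^ 2)
      = ∑' k : ℕ, ((-1 : ℝ) ^ k * x ^ (2 * k)) * y ^ (2 * k) := by
    intro y hy
    have hxy : ‖-(x ^ 2 * y ^ 2)‖ < 1 := by
      rw [norm_neg, Real.norm_eq_abs, abs_of_nonneg (by positivity)]
      have hx2 : x ^ 2 < 1 := by nlinarith
      have hy2 : y ^ 2 ≤ 1 := by nlinarith [hy.1, hy.2]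
      nlinarith [sq_nonneg x, sq_nonneg y]
    have h := tsum_geometric_of_norm_lt_one hxy
    rw [sub_neg_eq_add] at h
    rw [one_div, ← h]
    congr 1; funext k
    rw [neg_pow, mul_pow, pow_mul, pow_mul]
    ring
  rw [setIntegral_congr_fun measurableSet_Ioc key,
    ← MeasureTheory.integral_tsum_of_summable_integral_norm]
  · congr 1; funext k
    rw [pow_int k ((-1 : ℝ) ^ k * x ^ (2 * k))]
  · intro k
    exact (continuous_const.mul (continuous_pow _)).integrableOn_Ioc
  · have : (fun k : ℕ => ∫ y in Ioc (0:ℝ) 1, ‖((-1 : ℝ) ^ k * x ^ (2 * k)) * y ^ (2 * k)‖)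
        = fun k : ℕ => x ^ (2 * k) / (2 * k + 1) := by
      funext k
      rw [← pow_int k (x ^ (2 * k))]
      apply setIntegral_congr_fun measurableSet_Ioc
      intro y hy
      simp only [Real.norm_eq_abs, abs_mul, abs_pow, abs_neg, abs_one, one_pow, one_mul,
        abs_of_nonneg hx0, abs_of_nonneg hy.1.le]
    rw [this]
    exact sum_geom hx0 hx1

private lemma sum_sq : Summable fun k : ℕ => (1 : ℝ) / (2 * k + 1) ^ 2 := by
  have h : Summable fun k : ℕ => (1 : ℝ) / (k + 1) ^ 2 := by
    have := (summable_nat_add_iff (f := fun n : ℕ => (1 : ℝ) / n ^ 2) 1).mpr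
      ((Real.summable_one_div_nat_pow (p := 2)).mpr one_lt_two)
    apply this.congr
    intro n; push_cast; ring
  apply Summable.of_nonneg_of_le (fun k => by positivity) (fun k => ?_) h
  have hk : (0:ℝ) < (k:ℝ) + 1 := by positivity
  apply div_le_div_of_nonneg_left one_pos.le (by positivity)
  have : (k:ℝ) + 1 ≤ 2 * k + 1 := by linarith [Nat.cast_nonneg (α:=ℝ) k]
  nlinarith

private lemma outer_int :
    (∫ x in (0:ℝ)..1, ∑' k : ℕ, (-1 : ℝ) ^ k * x ^ (2 * k) / (2 * k + 1)) =
      ∑' k : ℕ, (-1 : ℝ) ^ k / (2 * k + 1) ^ 2 := by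
  rw [intervalIntegral.integral_of_le zero_le_one]
  have key : ∀ x ∈ Ioc (0:ℝ) 1, (∑' k : ℕ, (-1 : ℝ) ^ k * x ^ (2 * k) / (2 * k + 1))
      = ∑' k : ℕ, ((-1 : ℝ) ^ k / (2 * k + 1)) * x ^ (2 * k) := by
    intro x _
    congr 1; funext k; ring
  rw [setIntegral_congr_fun measurableSet_Ioc key,
    ← MeasureTheory.integral_tsum_of_summable_integral_norm]
  · congr 1; funext k
    rw [pow_int k ((-1 : ℝ) ^ k / (2 * k + 1))]
    rw [div_div]
    ring_nf
  · intro k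
    exact (continuous_const.mul (continuous_pow _)).integrableOn_Ioc
  · have : (fun k : ℕ => ∫ x in Ioc (0:ℝ) 1, ‖((-1 : ℝ) ^ k / (2 * k + 1)) * x ^ (2 * k)‖)
        = fun k : ℕ => (1 : ℝ) / (2 * k + 1) ^ 2 := by
      funext k
      have h1 : ((1:ℝ) / (2 * k + 1)) / (2 * k + 1) = 1 / (2 * k + 1) ^ 2 := by
        rw [div_div]; ring_nf
      rw [← h1, ← pow_int k ((1:ℝ) / (2 * k + 1))]
      apply setIntegral_congr_fun measurableSet_Ioc
      intro x hx
      have hpos : (0:ℝ) < 2 * k + 1 := by positivity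
      simp only [Real.norm_eq_abs, abs_mul, abs_div, abs_pow, abs_neg, abs_one, one_pow,
        abs_of_pos hpos, abs_of_nonneg hx.1.le]
    rw [this]
    exact sum_sq

theorem double_integral_catalan :
    (∫ x in (0:ℝ)..1, ∫ y in (0:ℝ)..1, 1 / (1 + x ^ 2 * y ^ 2)) =
      ∑' k : ℕ, (-1 : ℝ) ^ k / (2 * k + 1) ^ 2 := by
  rw [← outer_int]
  apply intervalIntegral.integral_congr_ae
  have hne : ∀ᵐ x : ℝ, x ≠ 1 := by
    refine ae_iff.mpr ?_
    simp
  filter_upwards [hne] with x hx hmem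
  rw [Set.uIoc_of_le zero_le_one] at hmem
  exact inner_int hmem.1.le (lt_of_le_of_ne hmem.2 hx)
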